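/- Let ã ∈ ℝⁿ, let P be an n×n real positive definite matrix and let r > 0. If ãᵀ P ã > r², then the unique minimizer of v ↦ (1/2)·(v − ã)ᵀ P (v − ã) over the set {v ∈ ℝⁿ : vᵀ P v ≤ r²} is v* = (r/√(ãᵀ P ã))·ã. -/

import Mathlib

set_option maxHeartbeats 1000000

open Matrix

section Aux

variable {n : ℕ} {P : Matrix (Fin n) (Fin n) ℝ}

lemma aux_symm (hP : P.PosDef) (u v : Fin n → ℝ) :
    u ⬝ᵥ P *ᵥ v = v ⬝ᵥ P *ᵥ u := by
  have hPt : Pᵀ = P := by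
    ext i j
    simpa using (hP.1.apply j i).symm
  calc u ⬝ᵥ P *ᵥ v = u ᵥ* P ⬝ᵥ v := dotProduct_mulVec _ _ _
    _ = (Pᵀ *ᵥ u) ⬝ᵥ v := by rw [mulVec_transpose]
    _ = (P *ᵥ u) ⬝ᵥ v := by rw [hPt]
    _ = v ⬝ᵥ P *ᵥ u := dotProduct_comm _ _

lemma aux_nonneg (hP : P.PosDef) (v : Fin n → ℝ) : 0 ≤ v ⬝ᵥ P *ᵥ v := by
  simpa using hP.posSemidef.dotProduct_mulVec_nonneg v

lemma aux_pos (hP : P.PosDef) {v : Fin n → ℝ} (hv : v ≠ 0) : 0 < v ⬝ᵥ P *ᵥ v := by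
  simpa using hP.dotProduct_mulVec_pos hv

lemma aux_eq_zero (hP : P.PosDef) {v : Fin n → ℝ} (hv : v ⬝ᵥ P *ᵥ v = 0) : v = 0 := by
  by_contra h
  exact absurd hv (ne_of_gt (aux_pos hP h))

lemma aux_smul (c : ℝ) (u v : Fin n → ℝ) :
    (c • u) ⬝ᵥ P *ᵥ v = c * (u ⬝ᵥ P *ᵥ v) := by
  rw [smul_dotProduct]; simp

lemma aux_smul' (c : ℝ) (u v : Fin n → ℝ) :
    u ⬝ᵥ P *ᵥ (c • v) = c * (u ⬝ᵥ P *ᵥ v) := by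
  rw [mulVec_smul, dotProduct_smul]; simp

lemma aux_sub (hP : P.PosDef) (u v : Fin n → ℝ) :
    (u - v) ⬝ᵥ P *ᵥ (u - v)
      = u ⬝ᵥ P *ᵥ u - 2 * (u ⬝ᵥ P *ᵥ v) + v ⬝ᵥ P *ᵥ v := by
  simp only [mulVec_sub, dotProduct_sub, sub_dotProduct]
  rw [aux_symm hP v u]
  ring

/-- Cauchy–Schwarz for the positive definite bilinear form. -/
lemma aux_cs (hP : P.PosDef) (u v : Fin n → ℝ) :
    (u ⬝ᵥ P *ᵥ v) ^ 2 ≤ (u ⬝ᵥ P *ᵥ u) * (v ⬝ᵥ P *ᵥ v) := by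
  rcases eq_or_ne v 0 with rfl | hv
  · simp
  have hvv : 0 < v ⬝ᵥ P *ᵥ v := aux_pos hP hv
  have key : 0 ≤ ((v ⬝ᵥ P *ᵥ v) • u - (u ⬝ᵥ P *ᵥ v) • v) ⬝ᵥ
      P *ᵥ ((v ⬝ᵥ P *ᵥ v) • u - (u ⬝ᵥ P *ᵥ v) • v) := aux_nonneg hP _
  rw [aux_sub hP, aux_smul, aux_smul, aux_smul, aux_smul', aux_smul', aux_smul'] at key
  nlinarith [key, hvv]

/-- Equality case of Cauchy–Schwarz. -/
lemma aux_cs_eq (hP : P.PosDef) {u v : Fin n → ℝ} (hv : v ≠ 0)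
    (h : (u ⬝ᵥ P *ᵥ v) ^ 2 = (u ⬝ᵥ P *ᵥ u) * (v ⬝ᵥ P *ᵥ v)) :
    u = ((u ⬝ᵥ P *ᵥ v) / (v ⬝ᵥ P *ᵥ v)) • v := by
  have hvv : 0 < v ⬝ᵥ P *ᵥ v := aux_pos hP hv
  have key : ((v ⬝ᵥ P *ᵥ v) • u - (u ⬝ᵥ P *ᵥ v) • v) ⬝ᵥ
      P *ᵥ ((v ⬝ᵥ P *ᵥ v) • u - (u ⬝ᵥ P *ᵥ v) • v) = 0 := by
    rw [aux_sub hP, aux_smul, aux_smul, aux_smul, aux_smul', aux_smul', aux_smul']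
    nlinarith [h]
  have hz := sub_eq_zero.mp (aux_eq_zero hP key)
  have h3 : u = ((v ⬝ᵥ P *ᵥ v)⁻¹ * (u ⬝ᵥ P *ᵥ v)) • v := by
    have h4 := congrArg (fun w : Fin n → ℝ => (v ⬝ᵥ P *ᵥ v)⁻¹ • w) hz
    simpa [smul_smul, inv_mul_cancel₀ hvv.ne', one_smul] using h4
  rw [div_eq_inv_mul]; exact h3

end Aux

/-- If `ãᵀ P ã > r²`, the unique minimizer of `v ↦ (1/2)(v − ã)ᵀ P (v − ã)` over
`{v : vᵀ P v ≤ r²}` is `v* = (r/√(ãᵀ P ã))·ã`. -/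
theorem stmt1 {n : ℕ} (P : Matrix (Fin n) (Fin n) ℝ) (hP : P.PosDef)
    (atil : Fin n → ℝ) (r : ℝ) (hr : 0 < r)
    (ha : atil ⬝ᵥ P *ᵥ atil > r ^ 2)
    (f : (Fin n → ℝ) → ℝ) (hf : f = fun v => (1 / 2) * ((v - atil) ⬝ᵥ P *ᵥ (v - atil)))
    (vStar : Fin n → ℝ) (hvStar : vStar = (r / Real.sqrt (atil ⬝ᵥ P *ᵥ atil)) • atil) :
    vStar ⬝ᵥ P *ᵥ vStar ≤ r ^ 2 ∧
      (∀ v, v ⬝ᵥ P *ᵥ v ≤ r ^ 2 → f vStar ≤ f v) ∧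
      ∀ v, v ⬝ᵥ P *ᵥ v ≤ r ^ 2 → (∀ w, w ⬝ᵥ P *ᵥ w ≤ r ^ 2 → f v ≤ f w) → v = vStar := by
  have ha2pos : (0:ℝ) < atil ⬝ᵥ P *ᵥ atil := lt_trans (by positivity) ha
  set a2 : ℝ := atil ⬝ᵥ P *ᵥ atil with ha2
  set a : ℝ := Real.sqrt a2 with haDef
  have haSq : a ^ 2 = a2 := Real.sq_sqrt ha2pos.le
  have haPos : 0 < a := Real.sqrt_pos.mpr ha2pos
  have hra : r < a := by nlinarith [ha, haSq, haPos]
  have hqvStar : vStar ⬝ᵥ P *ᵥ vStar = r ^ 2 := by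
    rw [hvStar, aux_smul, aux_smul', ← ha2, ← haSq]
    field_simp
  have hfv : ∀ v, f v = (1/2) * (v ⬝ᵥ P *ᵥ v) - v ⬝ᵥ P *ᵥ atil + (1/2) * a2 := by
    intro v
    rw [hf]
    simp only [aux_sub hP v atil, ← ha2]
    ring
  have hvStarA : vStar ⬝ᵥ P *ᵥ atil = r * a := by
    rw [hvStar, aux_smul, ← ha2, ← haSq]
    field_simp
  have hfvStar : f vStar = (1/2) * (a - r) ^ 2 := by
    rw [hfv, hqvStar, hvStarA, ← haSq]; ring
  -- generic Cauchy–Schwarz consequence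
  have hcs : ∀ v : Fin n → ℝ,
      v ⬝ᵥ P *ᵥ atil ≤ Real.sqrt (v ⬝ᵥ P *ᵥ v) * a := by
    intro v
    have h1 := aux_cs hP v atil
    calc v ⬝ᵥ P *ᵥ atil ≤ |v ⬝ᵥ P *ᵥ atil| := le_abs_self _
      _ = Real.sqrt ((v ⬝ᵥ P *ᵥ atil) ^ 2) := (Real.sqrt_sq_eq_abs _).symm
      _ ≤ Real.sqrt ((v ⬝ᵥ P *ᵥ v) * a2) := Real.sqrt_le_sqrt (by rw [ha2]; exact h1)
      _ = Real.sqrt (v ⬝ᵥ P *ᵥ v) * a := by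
          rw [Real.sqrt_mul (aux_nonneg hP v)]
  have lb : ∀ v, v ⬝ᵥ P *ᵥ v ≤ r ^ 2 → (1/2) * (a - r) ^ 2 ≤ f v := by
    intro v hv
    have hq0 : 0 ≤ v ⬝ᵥ P *ᵥ v := aux_nonneg hP v
    set t : ℝ := Real.sqrt (v ⬝ᵥ P *ᵥ v) with ht
    have htSq : t ^ 2 = v ⬝ᵥ P *ᵥ v := Real.sq_sqrt hq0
    have ht0 : 0 ≤ t := Real.sqrt_nonneg _
    have htr : t ≤ r := by nlinarith [htSq, ht0, hv]
    have hcsv := hcs v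
    rw [← ht] at hcsv
    rw [hfv, ← htSq, ← haSq]
    nlinarith [hcsv, htr, hra, ht0]
  refine ⟨hqvStar.le, fun v hv => hfvStar ▸ lb v hv, ?_⟩
  intro v hv hmin
  have h1 : f v ≤ (1/2) * (a - r) ^ 2 := hfvStar ▸ hmin vStar hqvStar.le
  have h2 : f v = (1/2) * (a - r) ^ 2 := le_antisymm h1 (lb v hv)
  have hq0 : 0 ≤ v ⬝ᵥ P *ᵥ v := aux_nonneg hP v
  set t : ℝ := Real.sqrt (v ⬝ᵥ P *ᵥ v) with ht
  have htSq : t ^ 2 = v ⬝ᵥ P *ᵥ v := Real.sq_sqrt hq0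
  have ht0 : 0 ≤ t := Real.sqrt_nonneg _
  have htr : t ≤ r := by nlinarith [htSq, ht0, hv]
  have hcsv := hcs v
  rw [← ht] at hcsv
  have hfv' : f v = (1/2) * t ^ 2 - v ⬝ᵥ P *ᵥ atil + (1/2) * a ^ 2 := by
    rw [hfv, htSq, haSq]
  have e1 : v ⬝ᵥ P *ᵥ atil = t * a := by nlinarith [hcsv, htr, hra, ht0, h2, hfv']
  have e2 : t = r := by nlinarith [htr, hra, h2, hfv', e1]
  have hane : atil ≠ 0 := by
    intro h0
    rw [ha2, h0] at ha2pos
    simp at ha2pos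
  have hcseq : (v ⬝ᵥ P *ᵥ atil) ^ 2 = (v ⬝ᵥ P *ᵥ v) * (atil ⬝ᵥ P *ᵥ atil) := by
    rw [e1, ← htSq, ← ha2, ← haSq]; ring
  have key := aux_cs_eq hP hane hcseq
  rw [← ha2, e1, e2] at key
  rw [key, hvStar]
  congr 1
  rw [← haSq]
  field_simp
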